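/- Let p be an odd prime, L = ⟨−1,2⟩ ≤ (Z/pZ)^×, and g a primitive root mod p. If ℓ = [(Z/pZ)^× : L] is an odd prime, then there exists i with 1 ≤ i ≤ ℓ−1 (so gcd(i,ℓ) = 1) such that (1 + g^i L) ∩ g^{2i} L ≠ ∅, i.e., A(i, 2i) ≠ 0. -/

import Mathlib

/-- The coset `g^i H` viewed as a subset of `ZMod p`. -/
def coset (p : ℕ) (g : (ZMod p)ˣ) (H : Subgroup (ZMod p)ˣ) (i : ℤ) : Set (ZMod p) :=
  (fun h : (ZMod p)ˣ => ((g ^ i * h : (ZMod p)ˣ) : ZMod p)) '' (H : Set (ZMod p)ˣ)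

/-- The cyclotomic number `A(i,j) = |(1 + g^i H) ∩ g^j H|`. -/
noncomputable def cyc (p : ℕ) (g : (ZMod p)ˣ) (H : Subgroup (ZMod p)ˣ) (i j : ℤ) : ℕ :=
  (((fun x => 1 + x) '' coset p g H i) ∩ coset p g H j).ncard

/- ----------------------------------------------------------------
   Auxiliary development
---------------------------------------------------------------- -/

namespace Aux13

open Finset

attribute [local instance] Classical.propDecidable

variable {p : ℕ} [Fact p.Prime] (L : Subgroup (ZMod p)ˣ)

/-- The set of values of `L` in `ZMod p`. -/
def lam (x : ZMod p) : Prop := ∃ h ∈ L, ((h : (ZMod p)ˣ) : ZMod p) = x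

lemma lam_ne_zero {x : ZMod p} (hx : lam L x) : x ≠ 0 := by
  obtain ⟨h, _, rfl⟩ := hx; exact Units.ne_zero h

lemma lam_one : lam L 1 := ⟨1, L.one_mem, Units.val_one⟩

lemma lam_mul {x y : ZMod p} (hx : lam L x) (hy : lam L y) : lam L (x * y) := by
  obtain ⟨a, ha, rfl⟩ := hx; obtain ⟨b, hb, rfl⟩ := hy
  exact ⟨a * b, L.mul_mem ha hb, Units.val_mul a b⟩

lemma lam_inv {x : ZMod p} (hx : lam L x) : lam L x⁻¹ := by
  obtain ⟨a, ha, rfl⟩ := hx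
  exact ⟨a⁻¹, L.inv_mem ha, Units.val_inv_eq_inv_val a⟩

lemma lam_unit_mem {w : (ZMod p)ˣ} (hx : lam L (w : ZMod p)) : w ∈ L := by
  obtain ⟨a, ha, hval⟩ := hx
  have : a = w := Units.ext hval
  exact this ▸ ha

lemma lam_neg (hneg : lam L (-1 : ZMod p)) {x : ZMod p} (hx : lam L x) :
    lam L (-x) := by
  have := lam_mul L hneg hx
  rwa [neg_one_mul] at this

lemma two_ne_zero' (h2 : lam L (2 : ZMod p)) : (2 : ZMod p) ≠ 0 :=
  lam_ne_zero L h2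

lemma four_eq : (4 : ZMod p) = 2 * 2 := by norm_num

lemma four_ne_zero' (h2 : lam L (2 : ZMod p)) : (4 : ZMod p) ≠ 0 := by
  rw [four_eq]; exact mul_ne_zero (two_ne_zero' L h2) (two_ne_zero' L h2)

lemma lam_four (h2 : lam L (2 : ZMod p)) : lam L (4 : ZMod p) := by
  rw [four_eq]; exact lam_mul L h2 h2

lemma lam_sixteen (h2 : lam L (2 : ZMod p)) : lam L (16 : ZMod p) := by
  have : (16 : ZMod p) = 4 * 4 := by norm_num
  rw [this]; exact lam_mul L (lam_four L h2) (lam_four L h2)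

lemma sixteen_ne_zero' (h2 : lam L (2 : ZMod p)) : (16 : ZMod p) ≠ 0 :=
  lam_ne_zero L (lam_sixteen L h2)

/-- If the index is odd, squares descend: `x ≠ 0`, `x*x ∈ Λ` implies `x ∈ Λ`. -/
lemma lam_of_sq (hodd : Odd L.index) {x : ZMod p} (hx : x ≠ 0)
    (hsq : lam L (x * x)) : lam L x := by
  have hu : IsUnit x := isUnit_iff_ne_zero.mpr hx
  obtain ⟨w, rfl⟩ := hu
  have hw2 : w * w ∈ L := by
    apply lam_unit_mem L
    rwa [Units.val_mul]
  have hnormal : L.Normal := Subgroup.normal_of_comm L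
  set Q := (ZMod p)ˣ ⧸ L
  have hcard : Nat.card Q = L.index := rfl
  have hmk : ((w : Q))^2 = 1 := by
    have h1 : ((w * w : (ZMod p)ˣ) : Q) = 1 := (QuotientGroup.eq_one_iff _).mpr hw2
    rw [← h1, pow_two]; rfl
  have hdvd2 : orderOf (w : Q) ∣ 2 := orderOf_dvd_iff_pow_eq_one.mpr hmk
  have hdvdc : orderOf (w : Q) ∣ L.index := hcard ▸ orderOf_dvd_natCard (w : Q)
  have h1 : orderOf (w : Q) = 1 := by
    rcases (Nat.dvd_prime Nat.prime_two).mp hdvd2 with h | h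
    · exact h
    · exfalso
      have h2d : (2 : ℕ) ∣ L.index := h ▸ hdvdc
      exact (Nat.not_even_iff_odd.mpr hodd) (even_iff_two_dvd.mpr h2d)
  have hq1 : (w : Q) = 1 := orderOf_eq_one_iff.mp h1
  exact ⟨w, (QuotientGroup.eq_one_iff _).mp hq1, rfl⟩

/-- Every `y^(L.index)` lies in `L`. -/
lemma pow_index_mem (y : (ZMod p)ˣ) : y ^ L.index ∈ L := by
  have hnormal : L.Normal := Subgroup.normal_of_comm L
  set Q := (ZMod p)ˣ ⧸ L
  have hdvdc : orderOf (y : Q) ∣ L.index := orderOf_dvd_natCard (y : Q)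
  have h1 : ((y : Q))^(L.index) = 1 := orderOf_dvd_iff_pow_eq_one.mp hdvdc
  have hmk : ((y ^ L.index : (ZMod p)ˣ) : Q) = 1 := by
    rw [← h1]; rfl
  exact (QuotientGroup.eq_one_iff _).mp hmk

lemma zpow_mem_of_dvd (g : (ZMod p)ˣ) {c : ℤ} (hc : (L.index : ℤ) ∣ c) :
    g ^ c ∈ L := by
  obtain ⟨m, rfl⟩ := hc
  rw [zpow_mul]
  apply Subgroup.zpow_mem
  rw [zpow_natCast]
  exact pow_index_mem L g

end Aux13

namespace Aux13

open Finset

variable {p : ℕ} [Fact p.Prime]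

/-- Square-root counting function. -/
noncomputable def sqc (x : ZMod p) : ℕ :=
  #(Finset.univ.filter (fun y : ZMod p => y * y = x))

lemma sqc_zero : sqc (0 : ZMod p) = 1 := by
  have h : (Finset.univ.filter (fun y : ZMod p => y * y = 0)) = {0} := by
    ext y; simp [mul_self_eq_zero]
  rw [sqc, h, card_singleton]

lemma sqc_of_sq (h2 : (2:ZMod p) ≠ 0) {x y : ZMod p} (hy : y * y = x) (hx : x ≠ 0) :
    sqc x = 2 := by
  have hyne : y ≠ 0 := by rintro rfl; rw [mul_zero] at hy; exact hx hy.symm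
  have h : (Finset.univ.filter (fun z : ZMod p => z * z = x)) = {y, -y} := by
    ext z
    simp only [mem_filter, mem_univ, true_and, mem_insert, mem_singleton]
    constructor
    · intro hz
      have hzz : z * z = y * y := by rw [hz, hy]
      exact mul_self_eq_mul_self_iff.mp hzz
    · rintro (rfl | rfl)
      · exact hy
      · rw [neg_mul_neg]; exact hy
  rw [sqc, h]
  rw [card_insert_of_notMem, card_singleton]
  simp only [mem_singleton]
  intro hcontra
  apply hyne
  have hsum : (2 : ZMod p) * y = 0 := by
    rw [two_mul]; nth_rewrite 1 [hcontra]; ring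
  rcases mul_eq_zero.mp hsum with h' | h'
  · exact absurd h' h2
  · exact h'

lemma sqc_of_not_square {x : ZMod p} (hx : ¬ IsSquare x) : sqc x = 0 := by
  rw [sqc, card_eq_zero]
  ext y
  simp only [mem_filter, mem_univ, true_and, notMem_empty, iff_false]
  intro h
  exact hx ⟨y, h.symm⟩

lemma sqc_pair (h2 : (2:ZMod p) ≠ 0) {x c : ZMod p} (hx : x ≠ 0) (hc : c ≠ 0)
    (hcns : ¬ IsSquare c) : sqc x + sqc (x * c) = 2 := by
  by_cases hxs : IsSquare x
  · obtain ⟨r, hr⟩ := hxs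
    have hr' : r * r = x := hr.symm
    have hrne : r ≠ 0 := by rintro rfl; rw [mul_zero] at hr'; exact hx hr'.symm
    have e1 : sqc x = 2 := sqc_of_sq h2 hr' hx
    have e2 : sqc (x * c) = 0 := by
      apply sqc_of_not_square
      rintro ⟨w, hw⟩
      apply hcns
      refine ⟨r⁻¹ * w, ?_⟩
      have : (r⁻¹ * w) * (r⁻¹ * w) = (r⁻¹ * r⁻¹) * (w * w) := by ring
      rw [this, ← hw, hr]
      field_simp
    omega
  · have e1 : sqc x = 0 := sqc_of_not_square hxs
    have e2 : sqc (x * c) = 2 := by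
      have hq1 : quadraticChar (ZMod p) x = -1 :=
        quadraticChar_neg_one_iff_not_isSquare.mpr hxs
      have hq2 : quadraticChar (ZMod p) c = -1 :=
        quadraticChar_neg_one_iff_not_isSquare.mpr hcns
      have hqm : quadraticChar (ZMod p) (x * c) = 1 := by
        rw [map_mul, hq1, hq2]; ring
      have hxc : x * c ≠ 0 := mul_ne_zero hx hc
      obtain ⟨w, hw⟩ := (quadraticChar_one_iff_isSquare hxc).mp hqm
      exact sqc_of_sq h2 hw.symm hxc
    omega

lemma sqc_sq_mul {c : ZMod p} (hc : c ≠ 0) (x : ZMod p) :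
    sqc (c * c * x) = sqc x := by
  unfold sqc
  apply Finset.card_bij (fun y _ => c⁻¹ * y)
  · intro a ha
    simp only [mem_filter, mem_univ, true_and] at ha ⊢
    have h1 : (c⁻¹ * a) * (c⁻¹ * a) = (c⁻¹ * c⁻¹) * (a * a) := by ring
    rw [h1, ha]
    field_simp
  · intro a _ b _ hab
    exact mul_left_cancel₀ (inv_ne_zero hc) hab
  · intro b hb
    simp only [mem_filter, mem_univ, true_and] at hb
    refine ⟨c * b, ?_, ?_⟩
    · simp only [mem_filter, mem_univ, true_and]
      rw [mul_mul_mul_comm, hb]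
    · field_simp

end Aux13

namespace Aux13

open Finset

attribute [local instance] Classical.propDecidable

variable {p : ℕ} [Fact p.Prime] (L : Subgroup (ZMod p)ˣ)

/-- `L` as a finset of `ZMod p`. -/
noncomputable def LF : Finset (ZMod p) := Finset.univ.filter (fun x => lam L x)

lemma mem_LF {x : ZMod p} : x ∈ LF L ↔ lam L x := by
  simp [LF]

lemma card_LF : #(LF L) = Nat.card L := by
  classical
  have himg : LF L = Finset.univ.image (fun h : L => ((h : (ZMod p)ˣ) : ZMod p)) := by
    ext x
    simp only [mem_LF, lam, Finset.mem_image, Finset.mem_univ, true_and]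
    constructor
    · rintro ⟨h, hh, rfl⟩; exact ⟨⟨h, hh⟩, rfl⟩
    · rintro ⟨⟨h, hh⟩, rfl⟩; exact ⟨h, hh, rfl⟩
  rw [himg, Finset.card_image_of_injective _ ?_, Finset.card_univ,
    Nat.card_eq_fintype_card]
  intro a b hab
  exact Subtype.ext (Units.ext hab)

noncomputable def Mset : Finset (ZMod p) :=
  Finset.univ.filter (fun z => lam L (z * (z + 1)))

noncomputable def M3set : Finset (ZMod p) :=
  Finset.univ.filter (fun t => lam L ((t * t - 1) * t⁻¹))

noncomputable def SQF : Finset (ZMod p) := (LF L).image (fun v => v * v)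

lemma SQF_subset : SQF L ⊆ LF L := by
  intro u hu
  obtain ⟨w, hw, rfl⟩ := Finset.mem_image.mp hu
  rw [mem_LF]
  exact lam_mul L ((mem_LF L).mp hw) ((mem_LF L).mp hw)

lemma card_fiber_sq (hneg : lam L (-1:ZMod p)) (h2 : lam L (2:ZMod p)) {u : ZMod p}
    (hu : u ∈ SQF L) : #((LF L).filter (fun v => v * v = u)) = 2 := by
  obtain ⟨w, hw, rfl⟩ := Finset.mem_image.mp hu
  have hwlam : lam L w := (mem_LF L).mp hw
  have hwne : w ≠ 0 := lam_ne_zero L hwlam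
  have hset : (LF L).filter (fun v => v * v = w * w) = {w, -w} := by
    ext v
    simp only [Finset.mem_filter, mem_LF, Finset.mem_insert, Finset.mem_singleton]
    constructor
    · rintro ⟨_, hv⟩
      exact mul_self_eq_mul_self_iff.mp hv
    · rintro (rfl | rfl)
      · exact ⟨hwlam, rfl⟩
      · exact ⟨lam_neg L hneg hwlam, by ring⟩
  rw [hset, Finset.card_insert_of_notMem, Finset.card_singleton]
  simp only [Finset.mem_singleton]
  intro hcontra
  apply hwne
  have hsum : (2 : ZMod p) * w = 0 := by
    rw [two_mul]; nth_rewrite 1 [hcontra]; ring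
  rcases mul_eq_zero.mp hsum with h' | h'
  · exact absurd h' (two_ne_zero' L h2)
  · exact h'

lemma card_Mset (h2 : lam L (2:ZMod p)) :
    #(Mset L) = ∑ v ∈ LF L, sqc (1 + 4 * v) := by
  rw [Finset.card_eq_sum_card_fiberwise
    (f := fun z => z * (z + 1)) (t := LF L) ?_]
  · apply Finset.sum_congr rfl
    intro v hv
    have hvlam : lam L v := (mem_LF L).mp hv
    have hvne : v ≠ 0 := lam_ne_zero L hvlam
    have h2ne : (2:ZMod p) ≠ 0 := two_ne_zero' L h2
    have h4ne : (4:ZMod p) ≠ 0 := four_ne_zero' L h2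
    unfold sqc
    apply Finset.card_bij (fun z _ => 2 * z + 1)
    · intro a ha
      simp only [Mset, Finset.mem_filter, Finset.mem_univ, true_and] at ha ⊢
      rw [show (2*a+1)*(2*a+1) = 4*(a*(a+1)) + 1 by ring, ha.2]; ring
    · intro a _ b _ hab
      have : (2:ZMod p) * a = 2 * b := by linear_combination hab
      exact mul_left_cancel₀ h2ne this
    · intro y hy
      simp only [Finset.mem_filter, Finset.mem_univ, true_and] at hy
      refine ⟨(y - 1) * 2⁻¹, ?_, ?_⟩
      · simp only [Mset, Finset.mem_filter, Finset.mem_univ, true_and]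
        have hval : ((y-1) * 2⁻¹) * (((y-1) * 2⁻¹) + 1) = v := by
          field_simp
          linear_combination hy
        rw [hval]
        exact ⟨hvlam, rfl⟩
      · field_simp; ring
  · intro z hz
    simp only [Mset, Finset.mem_coe, Finset.mem_filter, Finset.mem_univ, true_and] at hz
    exact (mem_LF L).mpr hz

lemma card_M3set (h2 : lam L (2:ZMod p)) :
    #(M3set L) = ∑ v ∈ LF L, sqc (v * v + 4) := by
  rw [Finset.card_eq_sum_card_fiberwise
    (f := fun t => (t * t - 1) * t⁻¹) (t := LF L) ?_]
  · apply Finset.sum_congr rfl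
    intro v hv
    have hvlam : lam L v := (mem_LF L).mp hv
    have hvne : v ≠ 0 := lam_ne_zero L hvlam
    have h2ne : (2:ZMod p) ≠ 0 := two_ne_zero' L h2
    have h4ne : (4:ZMod p) ≠ 0 := four_ne_zero' L h2
    have hone : (1:ZMod p) ≠ 0 := one_ne_zero
    -- rewrite the fiber as the root set of t*t - 1 = v*t
    have hfib : (M3set L).filter (fun t => (t * t - 1) * t⁻¹ = v)
        = Finset.univ.filter (fun t => t * t - 1 = v * t) := by
      ext t
      simp only [M3set, Finset.mem_filter, Finset.mem_univ, true_and]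
      constructor
      · rintro ⟨_, hval⟩
        have htne : t ≠ 0 := by
          rintro rfl
          rw [inv_zero, mul_zero] at hval
          exact hvne hval.symm
        calc t * t - 1 = ((t*t-1) * t⁻¹) * t := by field_simp
          _ = v * t := by rw [hval]
      · intro ht
        have htne : t ≠ 0 := by
          rintro rfl
          simp only [mul_zero, zero_mul] at ht
          have : (1:ZMod p) = 0 := by linear_combination -ht
          exact hone this
        have hval : (t * t - 1) * t⁻¹ = v := by
          rw [ht]; field_simp
        exact ⟨by rw [hval]; exact hvlam, hval⟩
    rw [hfib]
    unfold sqc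
    apply Finset.card_bij (fun t _ => 2 * t - v)
    · intro a ha
      simp only [Finset.mem_filter, Finset.mem_univ, true_and] at ha ⊢
      linear_combination 4 * ha
    · intro a _ b _ hab
      have : (2:ZMod p) * a = 2 * b := by linear_combination hab
      exact mul_left_cancel₀ h2ne this
    · intro y hy
      simp only [Finset.mem_filter, Finset.mem_univ, true_and] at hy
      refine ⟨(v + y) * 2⁻¹, ?_, ?_⟩
      · simp only [Finset.mem_filter, Finset.mem_univ, true_and]
        field_simp
        linear_combination hy
      · field_simp; ring
  · intro t ht
    simp only [M3set, Finset.mem_coe, Finset.mem_filter, Finset.mem_univ, true_and] at ht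
    exact (mem_LF L).mpr ht

end Aux13

namespace Aux13

open Finset

attribute [local instance] Classical.propDecidable

variable {p : ℕ} [Fact p.Prime] (L : Subgroup (ZMod p)ˣ)

lemma not_square_of_sdiff (hodd : Odd L.index) {v : ZMod p}
    (hv : v ∈ LF L \ SQF L) : ¬ IsSquare v := by
  obtain ⟨hvL, hvn⟩ := Finset.mem_sdiff.mp hv
  have hvlam := (mem_LF L).mp hvL
  have hvne := lam_ne_zero L hvlam
  rintro ⟨y, hy⟩
  have hyne : y ≠ 0 := by rintro rfl; rw [mul_zero] at hy; exact hvne hy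
  have hylam : lam L y := lam_of_sq L hodd hyne (hy ▸ hvlam)
  exact hvn (Finset.mem_image.mpr ⟨y, (mem_LF L).mpr hylam, hy.symm⟩)

lemma sum_sdiff_sqc (hneg : lam L (-1:ZMod p)) (h2 : lam L (2:ZMod p))
    (hodd : Odd L.index) :
    ∑ v ∈ LF L \ SQF L, sqc (1 + 4 * v) = #(LF L \ SQF L) := by
  have h2ne : (2:ZMod p) ≠ 0 := two_ne_zero' L h2
  have h4ne : (4:ZMod p) ≠ 0 := four_ne_zero' L h2
  have h16ne : (16:ZMod p) ≠ 0 := sixteen_ne_zero' L h2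
  have key : ∑ v ∈ LF L \ SQF L, ((sqc (1 + 4 * v) : ℤ) - 1) = 0 := by
    -- the involution v ↦ (16v)⁻¹
    have hmm : ∀ a ∈ LF L \ SQF L, (16 * a)⁻¹ ∈ LF L \ SQF L := by
      intro a ha
      obtain ⟨haL, han⟩ := Finset.mem_sdiff.mp ha
      have halam := (mem_LF L).mp haL
      have hane := lam_ne_zero L halam
      refine Finset.mem_sdiff.mpr ⟨(mem_LF L).mpr
        (lam_inv L (lam_mul L (lam_sixteen L h2) halam)), ?_⟩
      intro hsq
      obtain ⟨w, hwL, hw⟩ := Finset.mem_image.mp hsq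
      have hwlam := (mem_LF L).mp hwL
      have hwne := lam_ne_zero L hwlam
      have h16ane : 16 * a ≠ 0 := mul_ne_zero h16ne hane
      have hkey : (w * w) * (16 * a) = 1 := by
        rw [hw]; exact inv_mul_cancel₀ h16ane
      apply han
      apply Finset.mem_image.mpr
      refine ⟨(4 * w)⁻¹, (mem_LF L).mpr (lam_inv L (lam_mul L (lam_four L h2) hwlam)), ?_⟩
      have h4wne : (4:ZMod p) * w ≠ 0 := mul_ne_zero h4ne hwne
      field_simp
      linear_combination -hkey
    apply Finset.sum_involution (fun a _ => (16 * a)⁻¹)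
    · -- f a + f (g a) = 0
      intro a ha
      obtain ⟨haL, han⟩ := Finset.mem_sdiff.mp ha
      have halam := (mem_LF L).mp haL
      have hane := lam_ne_zero L halam
      by_cases h0 : 1 + 4 * a = 0
      · have hga : (16 * a)⁻¹ = a := by
          apply inv_eq_of_mul_eq_one_right
          have h4a : (4:ZMod p) * a = -1 := by linear_combination h0
          calc 16 * a * a = (4*a) * (4*a) := by ring
            _ = 1 := by rw [h4a]; ring
        rw [hga, h0, sqc_zero]
        norm_num
      · have e : 1 + 4 * ((16 * a)⁻¹) = (1 + 4 * a) * (4 * a)⁻¹ := by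
          field_simp
          ring
        have hcne : (4 * a)⁻¹ ≠ 0 := inv_ne_zero (mul_ne_zero h4ne hane)
        have hcns : ¬ IsSquare ((4 * a)⁻¹ : ZMod p) := by
          intro hsq
          obtain ⟨y, hy⟩ := hsq
          have hyne : y ≠ 0 := by
            rintro rfl; rw [mul_zero] at hy; exact hcne hy
          apply not_square_of_sdiff L hodd ha
          refine ⟨(2 * y)⁻¹, ?_⟩
          have : (4:ZMod p) * a = (y * y)⁻¹ := by
            rw [← hy, inv_inv]
          field_simp at this ⊢
          linear_combination this
        have hpair := sqc_pair h2ne h0 hcne hcns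
        rw [e]
        push_cast
        omega
    · -- g a ≠ a when f a ≠ 0
      intro a ha hfa
      obtain ⟨haL, han⟩ := Finset.mem_sdiff.mp ha
      have halam := (mem_LF L).mp haL
      have hane := lam_ne_zero L halam
      intro hga
      have h16ane : 16 * a ≠ 0 := mul_ne_zero h16ne hane
      have hsq : (4 * a) * (4 * a) = 1 := by
        have h1 := mul_inv_cancel₀ h16ane
        rw [hga] at h1
        linear_combination h1
      have : (4 * a - 1) * (4 * a + 1) = 0 := by linear_combination hsq
      rcases mul_eq_zero.mp this with h' | h'
      · -- 4a = 1 : a = (2⁻¹)² is a square in SQF, contradiction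
        apply han
        apply Finset.mem_image.mpr
        refine ⟨2⁻¹, (mem_LF L).mpr (lam_inv L h2), ?_⟩
        field_simp
        linear_combination -h'
      · -- 4a = -1 : 1 + 4a = 0, so f a = 0
        apply hfa
        have h0 : 1 + 4 * a = 0 := by linear_combination h'
        rw [h0, sqc_zero]
        norm_num
    · -- involutive
      intro a ha
      obtain ⟨haL, _⟩ := Finset.mem_sdiff.mp ha
      have hane := lam_ne_zero L ((mem_LF L).mp haL)
      field_simp
    · exact hmm
  have hcast : (∑ v ∈ LF L \ SQF L, (sqc (1 + 4 * v) : ℤ))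
      = #(LF L \ SQF L) := by
    have := key
    rw [Finset.sum_sub_distrib] at this
    simp only [Finset.sum_const, nsmul_eq_mul, mul_one] at this
    omega
  exact_mod_cast hcast

end Aux13

namespace Aux13

open Finset

attribute [local instance] Classical.propDecidable

variable {p : ℕ} [Fact p.Prime] (L : Subgroup (ZMod p)ˣ)

lemma count_identity (hneg : lam L (-1:ZMod p)) (h2 : lam L (2:ZMod p))
    (hodd : Odd L.index) :
    2 * #(Mset L) = Nat.card L + #(M3set L) := by
  have hM := card_Mset L h2
  have hM3 := card_M3set L h2
  -- pointwise rewrite of the M3 sum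
  have step1 : ∑ v ∈ LF L, sqc (v * v + 4) = ∑ v ∈ LF L, sqc (1 + 4 * (v⁻¹ * v⁻¹)) := by
    apply Finset.sum_congr rfl
    intro v hv
    have hvne := lam_ne_zero L ((mem_LF L).mp hv)
    have e : v * v + 4 = v * v * (1 + 4 * (v⁻¹ * v⁻¹)) := by
      field_simp
    rw [e, sqc_sq_mul hvne]
  have step2 : ∑ v ∈ LF L, sqc (1 + 4 * (v⁻¹ * v⁻¹))
      = ∑ v ∈ LF L, sqc (1 + 4 * (v * v)) := by
    apply Finset.sum_nbij (fun v => v⁻¹)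
    · intro a ha
      exact (mem_LF L).mpr (lam_inv L ((mem_LF L).mp ha))
    · intro a _ b _ hab
      exact inv_injective hab
    · intro b hb
      have hb' : b ∈ LF L := Finset.mem_coe.mp hb
      exact ⟨b⁻¹, Finset.mem_coe.mpr ((mem_LF L).mpr (lam_inv L ((mem_LF L).mp hb'))),
        inv_inv b⟩
    · intro a _
      rfl
  have hmaps : ∀ v ∈ LF L, v * v ∈ SQF L := by
    intro v hv; exact Finset.mem_image.mpr ⟨v, hv, rfl⟩
  have step3 : ∑ v ∈ LF L, sqc (1 + 4 * (v * v))
      = ∑ u ∈ SQF L, 2 * sqc (1 + 4 * u) := by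
    rw [← Finset.sum_fiberwise_of_maps_to hmaps (fun v => sqc (1 + 4 * (v * v)))]
    apply Finset.sum_congr rfl
    intro u hu
    have : ∀ v ∈ (LF L).filter (fun v => v * v = u), sqc (1 + 4 * (v * v)) = sqc (1 + 4 * u) := by
      intro v hv
      rw [(Finset.mem_filter.mp hv).2]
    rw [Finset.sum_congr rfl this, Finset.sum_const, card_fiber_sq L hneg h2 hu]
    simp [mul_comm]
  have step4 : #(LF L) = 2 * #(SQF L) := by
    rw [Finset.card_eq_sum_card_fiberwise hmaps]
    have : ∀ u ∈ SQF L, #((LF L).filter (fun v => v * v = u)) = 2 := fun u hu =>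
      card_fiber_sq L hneg h2 hu
    rw [Finset.sum_congr rfl this, Finset.sum_const, smul_eq_mul, mul_comm]
  have step5 : ∑ v ∈ LF L \ SQF L, sqc (1 + 4 * v) + ∑ v ∈ SQF L, sqc (1 + 4 * v)
      = ∑ v ∈ LF L, sqc (1 + 4 * v) := Finset.sum_sdiff (SQF_subset L)
  have step6 := sum_sdiff_sqc L hneg h2 hodd
  have step7 : #(LF L \ SQF L) = #(LF L) - #(SQF L) := Finset.card_sdiff_of_subset (SQF_subset L)
  have step8 : #(SQF L) ≤ #(LF L) := Finset.card_le_card (SQF_subset L)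
  have hcard := card_LF L
  have hM3' : #(M3set L) = 2 * ∑ u ∈ SQF L, sqc (1 + 4 * u) := by
    rw [hM3, step1, step2, step3, Finset.mul_sum]
  omega

/-- Consequence of the negation hypothesis, product form. -/
lemma lemA (hneg : lam L (-1:ZMod p))
    (hN : ∀ x : ZMod p, x ≠ 0 → lam L ((1 + x) * x⁻¹ * x⁻¹) → lam L x) :
    ∀ z : ZMod p, lam L (z * (z + 1)) → lam L z ∧ lam L (z + 1) := by
  intro z hz
  have hne := lam_ne_zero L hz
  have hz0 : z ≠ 0 := fun h => hne (by rw [h, zero_mul])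
  have hz1 : z + 1 ≠ 0 := fun h => hne (by rw [h, mul_zero])
  have hxne : -(z+1)⁻¹ ≠ 0 := neg_ne_zero.mpr (inv_ne_zero hz1)
  have key : (1 + (-(z+1)⁻¹)) * (-(z+1)⁻¹)⁻¹ * (-(z+1)⁻¹)⁻¹ = z * (z + 1) := by
    rw [inv_neg, inv_inv]
    field_simp
    ring
  have hx : lam L (-(z+1)⁻¹) := hN _ hxne (by rw [key]; exact hz)
  have hz1lam : lam L (z + 1) := by
    have h1 : lam L (-(-(z+1)⁻¹)⁻¹) := lam_neg L hneg (lam_inv L hx)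
    have e : -(-(z+1)⁻¹)⁻¹ = z + 1 := by
      rw [inv_neg, inv_inv]; ring
    rwa [e] at h1
  refine ⟨?_, hz1lam⟩
  have e2 : z = (z * (z + 1)) * (z + 1)⁻¹ := by field_simp
  rw [e2]
  exact lam_mul L hz (lam_inv L hz1lam)

/-- Consequence of the negation hypothesis: three-term version. -/
lemma lemC (hneg : lam L (-1:ZMod p)) (h2 : lam L (2:ZMod p))
    (hN : ∀ x : ZMod p, x ≠ 0 → lam L ((1 + x) * x⁻¹ * x⁻¹) → lam L x) :
    ∀ t : ZMod p, lam L ((t * t - 1) * t⁻¹) →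
      lam L (t - 1) ∧ lam L t ∧ lam L (t + 1) := by
  intro t hv
  have hne := lam_ne_zero L hv
  have ht0 : t ≠ 0 := by
    rintro rfl; rw [inv_zero, mul_zero] at hne; exact hne rfl
  have htt : t * t - 1 ≠ 0 := by
    intro h; rw [h, zero_mul] at hne; exact hne rfl
  have ht1 : t - 1 ≠ 0 := by
    intro h
    apply htt
    have : t = 1 := by linear_combination h
    rw [this]; ring
  have ht1' : t + 1 ≠ 0 := by
    intro h
    apply htt
    have : t = -1 := by linear_combination h
    rw [this]; ring
  have h4ne := four_ne_zero' L h2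
  have h4t : (4:ZMod p) * t ≠ 0 := mul_ne_zero h4ne ht0
  set w : ZMod p := (t-1) * (t-1) * (4*t)⁻¹ with hw
  have hw1 : w + 1 = (t+1) * (t+1) * (4*t)⁻¹ := by
    rw [hw]; field_simp; ring
  have hww : w * (w + 1)
      = ((t*t-1) * t⁻¹ * 4⁻¹) * ((t*t-1) * t⁻¹ * 4⁻¹) := by
    rw [hw1, hw]; field_simp; ring
  have hβ : lam L ((t*t-1) * t⁻¹ * 4⁻¹) :=
    lam_mul L hv (lam_inv L (lam_four L h2))
  have hwlam : lam L w ∧ lam L (w + 1) := by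
    apply lemA L hneg hN
    rw [hww]; exact lam_mul L hβ hβ
  -- w * 4 = (t-1)^2 / t
  have hw4 : w * 4 = (t-1) * (t-1) * t⁻¹ := by
    rw [hw]; field_simp
  have hlamw4 : lam L (w * 4) := lam_mul L hwlam.1 (lam_four L h2)
  -- apply hN at z = t - 1
  have ht1lam : lam L (t - 1) := by
    apply hN _ ht1
    have e : (1 + (t-1)) * (t-1)⁻¹ * (t-1)⁻¹ = (w * 4)⁻¹ := by
      rw [hw4]; field_simp; try ring
    rw [e]
    exact lam_inv L hlamw4
  have htlam : lam L t := by
    have e : t = (w * 4)⁻¹ * ((t-1) * (t-1)) := by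
      rw [hw4]; field_simp
    rw [e]
    exact lam_mul L (lam_inv L hlamw4) (lam_mul L ht1lam ht1lam)
  refine ⟨ht1lam, htlam, ?_⟩
  have e : t + 1 = ((t*t-1) * t⁻¹) * t * (t-1)⁻¹ := by
    field_simp
    ring
  rw [e]
  exact lam_mul L (lam_mul L hv htlam) (lam_inv L ht1lam)

end Aux13

open Finset Aux13 in
theorem stmt_13 (p : ℕ) [Fact p.Prime] (hodd : Odd p)
    (u : (ZMod p)ˣ) (hu : (u : ZMod p) = 2)
    (L : Subgroup (ZMod p)ˣ) (hL : L = Subgroup.closure {-1, u})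
    (ℓ : ℕ) (hℓ : L.index = ℓ) (hℓp : ℓ.Prime) (hℓodd : Odd ℓ)
    (g : (ZMod p)ˣ) (hg : ∀ x : (ZMod p)ˣ, x ∈ Subgroup.zpowers g) :
    ∃ i : ℕ, 1 ≤ i ∧ i ≤ ℓ - 1 ∧ cyc p g L (i : ℤ) (2 * (i : ℤ)) ≠ 0 := by
  classical
  by_contra hcon
  push_neg at hcon
  -- basic membership facts
  have humem : u ∈ L := by
    rw [hL]; exact Subgroup.subset_closure (by simp)
  have hnegmem : (-1 : (ZMod p)ˣ) ∈ L := by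
    rw [hL]; exact Subgroup.subset_closure (by simp)
  have h2 : lam L (2 : ZMod p) := ⟨u, humem, hu⟩
  have hneg : lam L (-1 : ZMod p) := ⟨-1, hnegmem, by simp⟩
  have hoddidx : Odd L.index := by rw [hℓ]; exact hℓodd
  have hℓpos : 0 < ℓ := hℓp.pos
  -- the key consequence of the negation
  have hN : ∀ x : ZMod p, x ≠ 0 → lam L ((1 + x) * x⁻¹ * x⁻¹) → lam L x := by
    intro x hxne hlx
    by_contra hxL
    have hxunit : IsUnit x := isUnit_iff_ne_zero.mpr hxne
    set xu := hxunit.unit with hxu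
    have hxuval : (xu : ZMod p) = x := hxunit.unit_spec
    obtain ⟨k, hk⟩ := Subgroup.mem_zpowers_iff.mp (hg xu)
    set i₀ : ℤ := k % (ℓ : ℤ) with hi₀
    have hℓZ : ((ℓ:ℤ)) ≠ 0 := by exact_mod_cast hℓpos.ne'
    have hi₀nonneg : 0 ≤ i₀ := Int.emod_nonneg k hℓZ
    have hi₀lt : i₀ < ℓ := Int.emod_lt_of_pos k (by exact_mod_cast hℓpos)
    have hdvd : (ℓ:ℤ) ∣ (k - i₀) := by
      refine ⟨k / (ℓ:ℤ), ?_⟩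
      rw [hi₀, Int.emod_def]; ring
    have hdvd' : ((L.index : ℤ)) ∣ (k - i₀) := by rw [hℓ]; exact hdvd
    by_cases hzero : i₀ = 0
    · -- then x ∈ L, contradiction
      apply hxL
      have : xu ∈ L := by
        have : g ^ (k - i₀) ∈ L := zpow_mem_of_dvd L g hdvd'
        rwa [hzero, sub_zero, hk] at this
      exact ⟨xu, this, hxuval⟩
    · set i : ℕ := i₀.toNat with hi
      have hicast : (i : ℤ) = i₀ := Int.toNat_of_nonneg hi₀nonneg
      have hige : 1 ≤ i := by omega
      have hile : i ≤ ℓ - 1 := by omega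
      have hczero := hcon i hige hile
      -- produce an element of the intersection
      obtain ⟨lu, hlu, hluval⟩ := hlx
      have hmem1 : x ∈ coset p g L (i : ℤ) := by
        refine ⟨g ^ (k - i₀), zpow_mem_of_dvd L g hdvd', ?_⟩
        have hgg : g ^ (i:ℤ) * g ^ (k - i₀) = xu := by
          rw [hicast, ← zpow_add]
          rw [show i₀ + (k - i₀) = k by ring, hk]
        show ((g ^ (i:ℤ) * g ^ (k - i₀) : (ZMod p)ˣ) : ZMod p) = x
        rw [hgg, hxuval]
      have hmem2 : (1 + x) ∈ coset p g L (2 * (i:ℤ)) := by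
        refine ⟨g ^ (k - i₀) * g ^ (k - i₀) * lu, ?_, ?_⟩
        · exact L.mul_mem (L.mul_mem (zpow_mem_of_dvd L g hdvd')
            (zpow_mem_of_dvd L g hdvd')) hlu
        · have hunits : g ^ (2 * (i:ℤ)) * (g ^ (k - i₀) * g ^ (k - i₀) * lu)
              = xu * xu * lu := by
            rw [hicast, ← hk]
            group
          show ((g ^ (2*(i:ℤ)) * (g ^ (k - i₀) * g ^ (k - i₀) * lu) : (ZMod p)ˣ) : ZMod p)
            = 1 + x
          rw [hunits]
          rw [Units.val_mul, Units.val_mul, hxuval, hluval]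
          field_simp
      have hmem : (1 + x) ∈ ((fun y => 1 + y) '' coset p g L (i:ℤ))
          ∩ coset p g L (2 * (i:ℤ)) := ⟨⟨x, hmem1, rfl⟩, hmem2⟩
      have hpos : 0 < cyc p g L (i:ℤ) (2 * (i:ℤ)) := by
        rw [cyc]
        rw [Set.ncard_pos (Set.toFinite _)]
        exact ⟨1 + x, hmem⟩
      omega
  -- set equalities
  have hMV : Mset L = Finset.univ.filter (fun t : ZMod p => lam L t ∧ lam L (t+1)) := by
    ext z
    simp only [Mset, Finset.mem_filter, Finset.mem_univ, true_and]
    constructor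
    · intro hz; exact lemA L hneg hN z hz
    · rintro ⟨h1, h2'⟩; exact lam_mul L h1 h2'
  have hM3T : M3set L = Finset.univ.filter
      (fun t : ZMod p => lam L (t-1) ∧ lam L t ∧ lam L (t+1)) := by
    ext t
    simp only [M3set, Finset.mem_filter, Finset.mem_univ, true_and]
    constructor
    · intro ht; exact lemC L hneg h2 hN t ht
    · rintro ⟨h1, h2', h3⟩
      have ht0 : t ≠ 0 := lam_ne_zero L h2'
      have e : (t * t - 1) * t⁻¹ = ((t - 1) * (t + 1)) * t⁻¹ := by
        congr 1; ring
      rw [e]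
      exact lam_mul L (lam_mul L h1 h3) (lam_inv L h2')
  -- combinatorial decomposition
  set V : Finset (ZMod p) := Finset.univ.filter (fun t => lam L t ∧ lam L (t+1)) with hV
  set P1 : Finset (ZMod p) := Finset.univ.filter
    (fun t => lam L t ∧ lam L (t+1) ∧ lam L (t+2)) with hP1
  set P2 : Finset (ZMod p) := Finset.univ.filter
    (fun t => (lam L t ∧ lam L (t+2)) ∧ ¬ lam L (t+1)) with hP2
  set D : Finset (ZMod p) := Finset.univ.filter
    (fun t => (lam L t ∧ ¬ lam L (t+1)) ∧ ¬ lam L (t+2)) with hD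
  set G2 : Finset (ZMod p) := Finset.univ.filter (fun t => lam L t ∧ lam L (t+2)) with hG2
  set B : Finset (ZMod p) := Finset.univ.filter (fun t => lam L t ∧ ¬ lam L (t+1)) with hB
  -- #T3 = #P1 : shift
  have hT3P1 : #(Finset.univ.filter
      (fun t : ZMod p => lam L (t-1) ∧ lam L t ∧ lam L (t+1))) = #P1 := by
    apply Finset.card_bij (fun t _ => t - 1)
    · intro a ha
      simp only [Finset.mem_filter, Finset.mem_univ, true_and] at ha
      simp only [hP1, Finset.mem_filter, Finset.mem_univ, true_and]
      refine ⟨ha.1, ?_, ?_⟩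
      · rw [show a - 1 + 1 = a by ring]; exact ha.2.1
      · rw [show a - 1 + 2 = a + 1 by ring]; exact ha.2.2
    · intro a _ b _ hab
      have : a - 1 + 1 = b - 1 + 1 := by rw [hab]
      simpa using this
    · intro b hb
      simp only [hP1, Finset.mem_filter, Finset.mem_univ, true_and] at hb
      refine ⟨b + 1, ?_, by ring⟩
      simp only [Finset.mem_filter, Finset.mem_univ, true_and]
      refine ⟨by rw [show b + 1 - 1 = b by ring]; exact hb.1, hb.2.1,
        by rw [show b + 1 + 1 = b + 2 by ring]; exact hb.2.2⟩
  -- #G2 = #V : doubling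
  have hG2V : #G2 = #V := by
    symm
    apply Finset.card_bij (fun s _ => 2 * s)
    · intro a ha
      simp only [hV, Finset.mem_filter, Finset.mem_univ, true_and] at ha
      simp only [hG2, Finset.mem_filter, Finset.mem_univ, true_and]
      refine ⟨lam_mul L h2 ha.1, ?_⟩
      rw [show (2*a+2 : ZMod p) = 2 * (a+1) by ring]
      exact lam_mul L h2 ha.2
    · intro a _ b _ hab
      exact mul_left_cancel₀ (two_ne_zero' L h2) hab
    · intro b hb
      simp only [hG2, Finset.mem_filter, Finset.mem_univ, true_and] at hb
      have h2ne := two_ne_zero' L h2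
      refine ⟨2⁻¹ * b, ?_, by field_simp⟩
      simp only [hV, Finset.mem_filter, Finset.mem_univ, true_and]
      refine ⟨lam_mul L (lam_inv L h2) hb.1, ?_⟩
      rw [show (2⁻¹ * b + 1 : ZMod p) = 2⁻¹ * (b + 2) by field_simp]
      exact lam_mul L (lam_inv L h2) hb.2
  -- partitions
  have hsplit1 : #(LF L) = #V + #B := by
    rw [hV, hB]
    have e1 : Finset.univ.filter (fun t : ZMod p => lam L t ∧ lam L (t+1))
        = (LF L).filter (fun t => lam L (t+1)) := by
      ext t; simp [LF, Finset.mem_filter, and_comm, and_assoc]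
    have e2 : Finset.univ.filter (fun t : ZMod p => lam L t ∧ ¬ lam L (t+1))
        = (LF L).filter (fun t => ¬ lam L (t+1)) := by
      ext t; simp [LF, Finset.mem_filter, and_comm, and_assoc]
    rw [e1, e2]
    exact (Finset.card_filter_add_card_filter_not _).symm
  have hsplit2 : #G2 = #P1 + #P2 := by
    rw [hG2, hP1, hP2]
    have e1 : Finset.univ.filter (fun t : ZMod p => lam L t ∧ lam L (t+1) ∧ lam L (t+2))
        = (Finset.univ.filter (fun t : ZMod p => lam L t ∧ lam L (t+2))).filter
            (fun t => lam L (t+1)) := by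
      ext t; simp only [Finset.mem_filter, Finset.mem_univ, true_and]; try tauto
    have e2 : Finset.univ.filter (fun t : ZMod p => (lam L t ∧ lam L (t+2)) ∧ ¬ lam L (t+1))
        = (Finset.univ.filter (fun t : ZMod p => lam L t ∧ lam L (t+2))).filter
            (fun t => ¬ lam L (t+1)) := by
      ext t; simp only [Finset.mem_filter, Finset.mem_univ, true_and]; try tauto
    rw [e1, e2]
    exact (Finset.card_filter_add_card_filter_not _).symm
  have hsplit3 : #B = #P2 + #D := by
    rw [hB, hP2, hD]
    have e1 : Finset.univ.filter (fun t : ZMod p => (lam L t ∧ lam L (t+2)) ∧ ¬ lam L (t+1))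
        = (Finset.univ.filter (fun t : ZMod p => lam L t ∧ ¬ lam L (t+1))).filter
            (fun t => lam L (t+2)) := by
      ext t; simp only [Finset.mem_filter, Finset.mem_univ, true_and]; try tauto
    have e2 : Finset.univ.filter (fun t : ZMod p => (lam L t ∧ ¬ lam L (t+1)) ∧ ¬ lam L (t+2))
        = (Finset.univ.filter (fun t : ZMod p => lam L t ∧ ¬ lam L (t+1))).filter
            (fun t => ¬ lam L (t+2)) := by
      ext t; simp only [Finset.mem_filter, Finset.mem_univ, true_and]; try tauto
    rw [e1, e2]
    exact (Finset.card_filter_add_card_filter_not _).symm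
  -- the counting identity
  have hident := count_identity L hneg h2 hoddidx
  have hMV' : #(Mset L) = #V := by rw [hMV]
  have hM3T' : #(M3set L) = #P1 := by rw [hM3T]; exact hT3P1
  have hcardLF := card_LF L
  -- conclude D = 0
  have hD0 : #D = 0 := by omega
  have hrule : ∀ t : ZMod p, lam L t → ¬ lam L (t+1) → lam L (t+2) := by
    intro t h1 h1'
    by_contra h2'
    have : t ∈ D := by
      rw [hD]
      simp only [Finset.mem_filter, Finset.mem_univ, true_and]
      exact ⟨⟨h1, h1'⟩, h2'⟩
    rw [Finset.card_eq_zero.mp hD0] at this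
    exact absurd this (Finset.notMem_empty t)
  -- every non-member is preceded by a member
  have hgap : ∀ k : ZMod p, ¬ lam L k → lam L (k - 1) := by
    intro k hk
    by_contra hk1
    have ind : ∀ j : ℕ, ¬ lam L (k - j) ∧ ¬ lam L (k - j - 1) := by
      intro j
      induction j with
      | zero => simpa using ⟨hk, hk1⟩
      | succ j ih =>
        constructor
        · have e : k - ((j:ℕ)+1 : ℕ) = k - j - 1 := by push_cast; ring
          rw [e]; exact ih.2
        · intro hmem
          have e : k - ((j:ℕ)+1 : ℕ) - 1 = k - j - 2 := by push_cast; ring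
          rw [e] at hmem
          have h1' : ¬ lam L ((k - j - 2) + 1) := by
            rw [show (k - (j:ZMod p) - 2) + 1 = k - j - 1 by ring]
            exact ih.2
          have := hrule _ hmem h1'
          rw [show (k - (j:ZMod p) - 2) + 2 = k - j by ring] at this
          exact ih.1 this
    have hval := (ind ((k-1).val)).1
    rw [ZMod.natCast_rightInverse (k-1)] at hval
    rw [show k - (k - 1) = 1 by ring] at hval
    exact hval (lam_one L)
  -- final counting
  set Kc : Finset (ZMod p) := Finset.univ.filter (fun x => ¬ lam L x) with hKc
  have hsplitK : #(LF L) + #Kc = p := by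
    rw [hKc, LF]
    rw [Finset.card_filter_add_card_filter_not (fun x => lam L x)]
    simp [ZMod.card]
  have hinj : #Kc ≤ #(LF L) := by
    apply Finset.card_le_card_of_injOn (fun k => k - 1)
    · intro a ha
      rw [hKc] at ha
      simp only [Finset.mem_coe, Finset.mem_filter, Finset.mem_univ, true_and] at ha
      exact (mem_LF L).mpr (hgap a ha)
    · intro a _ b _ hab
      have hab' : a - 1 = b - 1 := hab
      exact sub_left_inj.mp hab'
  have hfl : Nat.card L * ℓ = p - 1 := by
    have := Subgroup.card_mul_index L
    rw [hℓ] at this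
    rw [this, Nat.card_eq_fintype_card, ZMod.card_units]
  have hl3 : 3 ≤ ℓ := by
    obtain ⟨m, hm⟩ := hℓodd
    have := hℓp.two_le
    omega
  have hf1 : 1 ≤ Nat.card L := Nat.card_pos
  have hq3 : 3 * Nat.card L ≤ Nat.card L * ℓ := by
    calc 3 * Nat.card L = Nat.card L * 3 := by ring
    _ ≤ Nat.card L * ℓ := Nat.mul_le_mul_left _ hl3
  have hple : p ≤ 2 * Nat.card L := by omega
  omega
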